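/- Let (A, φ) be a B-valued probability space and a ∈ A. Then a is B-even (all odd B-valued moments vanish) if and only if all odd B-valued cumulants of a vanish: k_m(a,...,a) = c^{(m)}(a ⊗ b_2 a ⊗ ⋯ ⊗ b_m a) = 0_B for all odd m and all b_2,...,b_m ∈ B. -/

import Mathlib

/-!  Noncrossing partitions of an ordered tuple of algebra elements, encoded as
nested structures ("forests"), together with the `B`-valued multiplicative
extension `ĉ(π)` of a family of cumulant functionals `c`.

A noncrossing partition of `(a₁, …, aₙ)` is the same as a forest: the outer blocks,
in order, are trees; a tree consists of the block containing its first letter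
together with, for each later letter of that block, the (noncrossing) partition
nested in the gap preceding that letter.  The multiplicative extension evaluates
the deepest blocks by `c` and multiplies the resulting `B`-values into the next
letter from the left, and multiplies the values of the outer blocks. -/

mutual
  /-- A tree: one block together with the partitions nested in its gaps. -/
  inductive NCTree (A : Type u) : Type u where
    | node : A → NCGaps A → NCTree A
  /-- The later letters of a block, each preceded by a nested forest. -/
  inductive NCGaps (A : Type u) : Type u where
    | nil : NCGaps A
    | cons : NCForest A → A → NCGaps A → NCGaps A
  /-- A forest: the sequence of outer blocks (with their nested contents). -/
  inductive NCForest (A : Type u) : Type u where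
    | nil : NCForest A
    | cons : NCTree A → NCForest A → NCForest A
end

variable {A : Type u}

mutual
  /-- The letters (arguments) of a tree, in order. -/
  def NCTree.letters : NCTree A → List A
    | .node a g => a :: g.letters
  /-- The letters of the gaps part of a block. -/
  def NCGaps.letters : NCGaps A → List A
    | .nil => []
    | .cons f x g => f.letters ++ x :: g.letters
  /-- The letters of a forest, in order. -/
  def NCForest.letters : NCForest A → List A
    | .nil => []
    | .cons t f => t.letters ++ f.letters
end

mutual
  /-- The value `ĉ(π)` on a tree: apply the cumulant `c` to the block, with the
  values of nested partitions multiplied into the following block letter. -/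
  def NCTree.eval [Mul A] [One A] (c : List A → A) : NCTree A → A
    | .node a g => c (a :: g.evalArgs c)
  /-- The arguments contributed by the gaps of a block. -/
  def NCGaps.evalArgs [Mul A] [One A] (c : List A → A) : NCGaps A → List A
    | .nil => []
    | .cons f x g => (f.eval c * x) :: g.evalArgs c
  /-- The value `ĉ(π)` on a forest: the product of the values of the outer blocks. -/
  def NCForest.eval [Mul A] [One A] (c : List A → A) : NCForest A → A
    | .nil => 1
    | .cons t f => t.eval c * f.eval c
end

/-- The number of letters of a block beyond its first one. -/
def NCGaps.blockLen : NCGaps A → ℕ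
  | .nil => 0
  | .cons _ _ g => g.blockLen + 1

mutual
  /-- Every block of the tree has even size. -/
  def NCTree.evenBlocks : NCTree A → Prop
    | .node _ g => Even (g.blockLen + 1) ∧ g.evenBlocks
  /-- Every block nested in the gaps has even size. -/
  def NCGaps.evenBlocks : NCGaps A → Prop
    | .nil => True
    | .cons f _ g => f.evenBlocks ∧ g.evenBlocks
  /-- Every block of the forest has even size. -/
  def NCForest.evenBlocks : NCForest A → Prop
    | .nil => True
    | .cons t f => t.evenBlocks ∧ f.evenBlocks
end

/-! ### auxiliary simp lemmas -/

@[simp] lemma lettersT_node (x : A) (g : NCGaps A) :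
    (NCTree.node x g).letters = x :: g.letters := rfl
@[simp] lemma lettersG_nil : (NCGaps.nil : NCGaps A).letters = [] := rfl
@[simp] lemma lettersG_cons (f : NCForest A) (x : A) (g : NCGaps A) :
    (NCGaps.cons f x g).letters = f.letters ++ x :: g.letters := rfl
@[simp] lemma lettersF_nil : (NCForest.nil : NCForest A).letters = [] := rfl
@[simp] lemma lettersF_cons (t : NCTree A) (f : NCForest A) :
    (NCForest.cons t f).letters = t.letters ++ f.letters := rfl

section EvalSimp
variable [Mul A] [One A] (c : List A → A)
@[simp] lemma evalT_node (x : A) (g : NCGaps A) :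
    (NCTree.node x g).eval c = c (x :: g.evalArgs c) := rfl
@[simp] lemma evalG_nil : (NCGaps.nil : NCGaps A).evalArgs c = [] := rfl
@[simp] lemma evalG_cons (f : NCForest A) (x : A) (g : NCGaps A) :
    (NCGaps.cons f x g).evalArgs c = (f.eval c * x) :: g.evalArgs c := rfl
@[simp] lemma evalF_nil : (NCForest.nil : NCForest A).eval c = 1 := rfl
@[simp] lemma evalF_cons (t : NCTree A) (f : NCForest A) :
    (NCForest.cons t f).eval c = t.eval c * f.eval c := rfl
end EvalSimp

@[simp] lemma blockLen_nil : (NCGaps.nil : NCGaps A).blockLen = 0 := rfl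
@[simp] lemma blockLen_cons (f : NCForest A) (x : A) (g : NCGaps A) :
    (NCGaps.cons f x g).blockLen = g.blockLen + 1 := rfl

lemma NCTree.letters_ne_nil (t : NCTree A) : t.letters ≠ [] := by
  cases t with | node x g => simp

lemma NCTree.letters_pos (t : NCTree A) : 0 < t.letters.length := by
  cases t with | node x g => simp

lemma NCForest.eq_nil_of_letters (f : NCForest A) (h : f.letters = []) : f = .nil := by
  cases f with
  | nil => rfl
  | cons t g => cases t with | node x gg => simp at h

lemma NCGaps.eq_nil_of_letters (g : NCGaps A) (h : g.letters = []) : g = .nil := by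
  cases g with
  | nil => rfl
  | cons f x gg => simp at h

lemma forest_dec (f : NCForest A) (x : A) (t : List A) (h : f.letters = x :: t) :
    ∃ g rest, f = NCForest.cons (NCTree.node x g) rest ∧ g.letters ++ rest.letters = t := by
  cases f with
  | nil => simp at h
  | cons tr rest =>
    cases tr with
    | node y g =>
      simp only [lettersF_cons, lettersT_node, List.cons_append, List.cons.injEq] at h
      exact ⟨g, rest, by rw [h.1], h.2⟩

/-! ### trivial (one-block) forest -/

def trivGaps : List A → NCGaps A
  | [] => .nil
  | x :: t => .cons .nil x (trivGaps t)

@[simp] lemma trivGaps_letters (t : List A) : (trivGaps t).letters = t := by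
  induction t with
  | nil => rfl
  | cons x t ih => simp [trivGaps, ih]

@[simp] lemma trivGaps_blockLen (t : List A) : (trivGaps t).blockLen = t.length := by
  induction t with
  | nil => rfl
  | cons x t ih => simp [trivGaps, ih]

@[simp] lemma trivGaps_evalArgs [Monoid A] (c : List A → A) (t : List A) :
    (trivGaps t).evalArgs c = t := by
  induction t with
  | nil => rfl
  | cons x t ih => simp [trivGaps, ih]

def trivF (x : A) (t : List A) : NCForest A := .cons (.node x (trivGaps t)) .nil

@[simp] lemma trivF_letters (x : A) (t : List A) : (trivF x t).letters = x :: t := by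
  simp [trivF]

@[simp] lemma trivF_eval [Monoid A] (c : List A → A) (x : A) (t : List A) :
    (trivF x t).eval c = c (x :: t) := by
  simp [trivF]

/-! ### blockLen facts -/

theorem blockLen_le : ∀ g : NCGaps A, g.blockLen ≤ g.letters.length
  | .nil => le_refl _
  | .cons f x g => by
      have := blockLen_le g
      simp; omega

theorem eq_trivGaps_of_blockLen : ∀ g : NCGaps A,
    g.blockLen = g.letters.length → g = trivGaps g.letters
  | .nil => fun _ => rfl
  | .cons f x g => by
      intro h
      have hle := blockLen_le g
      simp at h
      have hf : f.letters.length = 0 := by omega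
      have hg : g.blockLen = g.letters.length := by omega
      have hf' : f = .nil := NCForest.eq_nil_of_letters f (List.length_eq_zero_iff.mp hf)
      have ih := eq_trivGaps_of_blockLen g hg
      subst hf'
      simp only [lettersG_cons, lettersF_nil, List.nil_append, trivGaps]
      rw [← ih]

theorem evalArgs_length [Mul A] [One A] (c : List A → A) :
    ∀ g : NCGaps A, (g.evalArgs c).length = g.blockLen
  | .nil => rfl
  | .cons f x g => by simp [evalArgs_length c g]

theorem evalF_mem [Ring A] (B : Subring A) (c : List A → A) (hcB : ∀ l, c l ∈ B) :
    ∀ f : NCForest A, f.eval c ∈ B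
  | .nil => one_mem B
  | .cons t f => by
      have h2 := evalF_mem B c hcB f
      cases t with | node x g => simpa using mul_mem (hcB (x :: g.evalArgs c)) h2
/-! ### finiteness of the set of forests with given letters -/

lemma finite_aux [Ring A] : ∀ n : ℕ,
    (∀ l : List A, l.length ≤ n → {f : NCForest A | f.letters = l}.Finite) ∧
    (∀ l : List A, l.length ≤ n → {g : NCGaps A | g.letters = l}.Finite) := by
  intro n
  induction n with
  | zero =>
    constructor
    · intro l hl
      have hl' : l = [] := List.length_eq_zero_iff.mp (Nat.le_zero.mp hl)
      subst hl'
      apply Set.Finite.subset (Set.finite_singleton NCForest.nil)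
      intro f hf
      simp only [Set.mem_singleton_iff]
      exact NCForest.eq_nil_of_letters f hf
    · intro l hl
      have hl' : l = [] := List.length_eq_zero_iff.mp (Nat.le_zero.mp hl)
      subst hl'
      apply Set.Finite.subset (Set.finite_singleton NCGaps.nil)
      intro g hg
      simp only [Set.mem_singleton_iff]
      exact NCGaps.eq_nil_of_letters g hg
  | succ n ih =>
    obtain ⟨ihF, ihG⟩ := ih
    have forestCase : ∀ l : List A, l.length ≤ n + 1 → {f : NCForest A | f.letters = l}.Finite := by
      intro l hl
      match l with
      | [] =>
        apply Set.Finite.subset (Set.finite_singleton NCForest.nil)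
        intro f hf
        simp only [Set.mem_singleton_iff]
        exact NCForest.eq_nil_of_letters f hf
      | x :: t =>
        have ht : t.length ≤ n := by simpa using hl
        apply Set.Finite.subset
          (Set.Finite.biUnion (Set.finite_Iic t.length) (fun i _ =>
            Set.Finite.image
              (fun p : NCGaps A × NCForest A => NCForest.cons (NCTree.node x p.1) p.2)
              (Set.Finite.prod
                (ihG (t.take i) (by simp; omega))
                (ihF (t.drop i) (by simp; omega)))))
        intro f hf
        obtain ⟨g, rest, rfl, hsplit⟩ := forest_dec f x t hf
        have hlen : g.letters.length ≤ t.length := by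
          rw [← hsplit]; simp
        refine Set.mem_biUnion (Set.mem_Iic.mpr hlen) ?_
        refine ⟨(g, rest), ⟨?_, ?_⟩, rfl⟩
        · show g.letters = t.take g.letters.length
          rw [← hsplit, List.take_left]
        · show rest.letters = t.drop g.letters.length
          rw [← hsplit, List.drop_left]
    refine ⟨forestCase, ?_⟩
    intro l hl
    apply Set.Finite.subset
      (Set.Finite.union (Set.finite_singleton NCGaps.nil)
        (Set.Finite.biUnion (Set.finite_Iio l.length) (fun i hi =>
          Set.Finite.image
            (fun p : NCForest A × NCGaps A => NCGaps.cons p.1 ((l.drop i).headD 0) p.2)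
            (Set.Finite.prod
              (ihF (l.take i) (by simp only [List.length_take]; simp at hi; omega))
              (ihG ((l.drop i).tail) (by simp; omega))))))
    intro g hg
    cases g with
    | nil => exact Or.inl rfl
    | cons f y gg =>
      right
      have hlet : f.letters ++ y :: gg.letters = l := hg
      have hdrop : l.drop f.letters.length = y :: gg.letters := by
        rw [← hlet, List.drop_left]
      have hmemI : f.letters.length ∈ Set.Iio l.length := by
        rw [Set.mem_Iio, ← hlet]; simp
      refine Set.mem_biUnion hmemI ?_
      refine ⟨(f, gg), ⟨?_, ?_⟩, ?_⟩
      · show f.letters = l.take f.letters.length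
        rw [← hlet, List.take_left]
      · show gg.letters = (l.drop f.letters.length).tail
        rw [hdrop]; rfl
      · show NCGaps.cons f ((l.drop f.letters.length).headD 0) gg = NCGaps.cons f y gg
        rw [hdrop]; rfl

lemma finite_S [Ring A] (l : List A) : {f : NCForest A | f.letters = l}.Finite :=
  (finite_aux l.length).1 l le_rfl
/-! ### the moment–cumulant recursion -/

attribute [local instance] Classical.decEq

lemma REC [Ring A] (φ : A → A) (c : List A → A)
    (hmc : ∀ l : List A, l ≠ [] →
      φ l.prod = ∑ᶠ f ∈ {f : NCForest A | f.letters = l}, f.eval c)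
    (x : A) (t : List A) :
    φ ((x :: t).prod)
      = c (x :: t) + ∑ f ∈ ((finite_S (x :: t)).toFinset.erase (trivF x t)), f.eval c := by
  have h := hmc (x :: t) (by simp)
  rw [h]
  have hset : ∑ᶠ f ∈ {f : NCForest A | f.letters = x :: t}, f.eval c
      = ∑ f ∈ (finite_S (x :: t)).toFinset, f.eval c :=
    finsum_mem_eq_sum_of_subset _
      (fun y hy => by simpa [Set.Finite.mem_toFinset] using hy.1)
      (fun y hy => by simpa [Set.Finite.mem_toFinset] using hy)
  rw [hset]
  have hmem : trivF x t ∈ (finite_S (x :: t)).toFinset := by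
    simp [Set.Finite.mem_toFinset]
  rw [← Finset.add_sum_erase _ _ hmem, trivF_eval]

def mapHead [Mul A] (b : A) : NCForest A → NCForest A
  | .nil => .nil
  | .cons (.node y g) f => .cons (.node (b * y) g) f

@[simp] lemma mapHead_cons [Mul A] (b x : A) (g : NCGaps A) (f : NCForest A) :
    mapHead b (NCForest.cons (NCTree.node x g) f)
      = NCForest.cons (NCTree.node (b * x) g) f := by
  rw [mapHead]

/-! ### left B-multiplicativity of the cumulants -/

lemma Lmul [Ring A] (B : Subring A) (φ : A → A) (c : List A → A)
    (hbimod : ∀ b ∈ B, ∀ b' ∈ B, ∀ x : A, φ (b * x * b') = b * φ x * b')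
    (hmc : ∀ l : List A, l ≠ [] →
      φ l.prod = ∑ᶠ f ∈ {f : NCForest A | f.letters = l}, f.eval c) :
    ∀ (x : A) (t : List A), ∀ b ∈ B, c (b * x :: t) = b * c (x :: t) := by
  suffices H : ∀ n (x : A) (t : List A), t.length + 1 ≤ n → ∀ b ∈ B,
      c (b * x :: t) = b * c (x :: t) by
    exact fun x t b hb => H (t.length + 1) x t le_rfl b hb
  intro n
  induction n with
  | zero => intro x t h; omega
  | succ n IH =>
    intro x t hlen b hb
    have R1 := REC φ c hmc (b * x) t
    have R2 := REC φ c hmc x t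
    have hphi : φ (((b * x) :: t).prod) = b * φ ((x :: t).prod) := by
      have hprod : ((b * x) :: t).prod = b * ((x :: t).prod) := by
        simp [List.prod_cons, mul_assoc]
      rw [hprod]
      have := hbimod b hb 1 (one_mem B) ((x :: t).prod)
      simpa [mul_one] using this
    have hsum : ∑ f ∈ ((finite_S ((b * x) :: t)).toFinset.erase (trivF (b * x) t)), f.eval c
        = b * ∑ f ∈ ((finite_S (x :: t)).toFinset.erase (trivF x t)), f.eval c := by
      rw [Finset.mul_sum]
      have himg : (finite_S ((b * x) :: t)).toFinset.erase (trivF (b * x) t)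
          = ((finite_S (x :: t)).toFinset.erase (trivF x t)).image (mapHead b) := by
        ext f'
        simp only [Finset.mem_erase, Set.Finite.mem_toFinset, Set.mem_setOf_eq,
          Finset.mem_image]
        constructor
        · rintro ⟨hne, hlet⟩
          obtain ⟨g, rest, rfl, hsplit⟩ := forest_dec f' (b * x) t hlet
          refine ⟨NCForest.cons (NCTree.node x g) rest, ⟨?_, ?_⟩, rfl⟩
          · intro hc
            apply hne
            rw [show trivF x t = NCForest.cons (NCTree.node x (trivGaps t)) NCForest.nil from rfl]
              at hc
            injection hc with h1 h2
            injection h1 with h3 h4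
            subst h4; subst h2; rfl
          · simp [hsplit]
        · rintro ⟨f, ⟨hne, hlet⟩, rfl⟩
          obtain ⟨g, rest, rfl, hsplit⟩ := forest_dec f x t hlet
          constructor
          · intro hc
            apply hne
            rw [mapHead_cons,
              show trivF (b * x) t
                = NCForest.cons (NCTree.node (b * x) (trivGaps t)) NCForest.nil from rfl] at hc
            injection hc with h1 h2
            injection h1 with h3 h4
            subst h4; subst h2; rfl
          · rw [mapHead_cons]
            simp [hsplit]
      rw [himg]
      rw [Finset.sum_image ?hinj]
      case hinj =>
        intro f1 h1 f2 h2 heq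
        simp only [Finset.mem_coe, Finset.mem_erase, Set.Finite.mem_toFinset, Set.mem_setOf_eq] at h1 h2
        obtain ⟨g1, r1, rfl, -⟩ := forest_dec f1 x t h1.2
        obtain ⟨g2, r2, rfl, -⟩ := forest_dec f2 x t h2.2
        rw [mapHead_cons, mapHead_cons] at heq
        injection heq with h1' h2'
        injection h1' with h3' h4'
        subst h4'; subst h2'; rfl
      apply Finset.sum_congr rfl
      intro f hf
      simp only [Finset.mem_erase, Set.Finite.mem_toFinset, Set.mem_setOf_eq] at hf
      obtain ⟨hne, hlet⟩ := hf
      obtain ⟨g, rest, rfl, hsplit⟩ := forest_dec f x t hlet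
      have hlens : g.letters.length + rest.letters.length = t.length := by
        rw [← hsplit]; simp
      have hbl : g.blockLen + 1 ≤ n := by
        by_contra hgt
        have h1 := blockLen_le g
        have hgl : g.blockLen = g.letters.length ∧ rest.letters.length = 0 := by omega
        have hrest : rest = NCForest.nil :=
          NCForest.eq_nil_of_letters rest (List.length_eq_zero_iff.mp hgl.2)
        have hgt' : g = trivGaps g.letters := eq_trivGaps_of_blockLen g hgl.1
        apply hne
        subst hrest
        have hgl2 : g.letters = t := by simpa using hsplit
        rw [hgt', hgl2]
        rfl
      rw [mapHead_cons]
      simp only [evalF_cons, evalT_node]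
      rw [IH x (g.evalArgs c) (by rw [evalArgs_length]; exact hbl) b hb, mul_assoc]
    have key : c (b * x :: t)
          + ∑ f ∈ ((finite_S ((b * x) :: t)).toFinset.erase (trivF (b * x) t)), f.eval c
        = b * c (x :: t)
          + ∑ f ∈ ((finite_S ((b * x) :: t)).toFinset.erase (trivF (b * x) t)), f.eval c := by
      rw [← R1, hphi, R2, mul_add, ← hsum]
    exact add_right_cancel key
/-! ### a zero entry kills a cumulant -/

lemma Zstruct [Ring A] (c : List A → A) (N : ℕ)
    (H : ∀ l' : List A, l'.length ≤ N → (0 : A) ∈ l' → c l' = 0) :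
    ∀ k : ℕ,
      (∀ t : NCTree A, t.letters.length ≤ k → t.letters.length ≤ N →
        (0 : A) ∈ t.letters → t.eval c = 0) ∧
      (∀ g : NCGaps A, g.letters.length ≤ k → g.letters.length ≤ N →
        (0 : A) ∈ g.letters → (0 : A) ∈ g.evalArgs c) ∧
      (∀ f : NCForest A, f.letters.length ≤ k → f.letters.length ≤ N →
        (0 : A) ∈ f.letters → f.eval c = 0) := by
  intro k
  induction k with
  | zero =>
    refine ⟨?_, ?_, ?_⟩
    · intro t hk _ hm
      exact absurd hm (by
        have : t.letters = [] := List.length_eq_zero_iff.mp (Nat.le_zero.mp hk)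
        simp [this])
    · intro g hk _ hm
      exact absurd hm (by
        have : g.letters = [] := List.length_eq_zero_iff.mp (Nat.le_zero.mp hk)
        simp [this])
    · intro f hk _ hm
      exact absurd hm (by
        have : f.letters = [] := List.length_eq_zero_iff.mp (Nat.le_zero.mp hk)
        simp [this])
  | succ k IH =>
    obtain ⟨IHt, IHg, IHf⟩ := IH
    have Tc : ∀ t : NCTree A, t.letters.length ≤ k + 1 → t.letters.length ≤ N →
        (0 : A) ∈ t.letters → t.eval c = 0 := by
      intro t hk hN hm
      cases t with | node x g =>
      simp only [lettersT_node, List.length_cons, List.mem_cons] at hk hN hm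
      have hbl : (x :: g.evalArgs c).length ≤ N := by
        have h1 := blockLen_le g
        have h2 := evalArgs_length c g
        simp only [List.length_cons]
        omega
      rcases hm with h0 | h0
      · exact H _ hbl (by simp [← h0])
      · have hargs := IHg g (by omega) (by omega) h0
        exact H _ hbl (by simp [hargs])
    have Gc : ∀ g : NCGaps A, g.letters.length ≤ k + 1 → g.letters.length ≤ N →
        (0 : A) ∈ g.letters → (0 : A) ∈ g.evalArgs c := by
      intro g hk hN hm
      cases g with
      | nil => simp at hm
      | cons f x gg =>
        simp only [lettersG_cons, List.mem_append, List.mem_cons, List.length_append,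
          List.length_cons] at hm hk hN
        simp only [evalG_cons, List.mem_cons]
        rcases hm with h0 | h0 | h0
        · left
          rw [IHf f (by omega) (by omega) h0, zero_mul]
        · left
          rw [← h0, mul_zero]
        · right
          exact IHg gg (by omega) (by omega) h0
    have Fc : ∀ f : NCForest A, f.letters.length ≤ k + 1 → f.letters.length ≤ N →
        (0 : A) ∈ f.letters → f.eval c = 0 := by
      intro f hk hN hm
      cases f with
      | nil => simp at hm
      | cons t ff =>
        simp only [lettersF_cons, List.mem_append, List.length_append] at hm hk hN
        have hpos := t.letters_pos
        rcases hm with h0 | h0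
        · rw [evalF_cons, Tc t (by omega) (by omega) h0, zero_mul]
        · rw [evalF_cons, IHf ff (by omega) (by omega) h0, mul_zero]
    exact ⟨Tc, Gc, Fc⟩

lemma phi_zero [Ring A] (φ : A → A) (hadd : ∀ x y, φ (x + y) = φ x + φ y) : φ 0 = 0 := by
  have h := hadd 0 0
  rw [add_zero] at h
  exact left_eq_add.mp h

lemma Zl [Ring A] (φ : A → A) (c : List A → A)
    (hadd : ∀ x y, φ (x + y) = φ x + φ y)
    (hmc : ∀ l : List A, l ≠ [] →
      φ l.prod = ∑ᶠ f ∈ {f : NCForest A | f.letters = l}, f.eval c) :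
    ∀ l : List A, (0 : A) ∈ l → c l = 0 := by
  suffices H : ∀ n, ∀ l : List A, l.length ≤ n → (0 : A) ∈ l → c l = 0 by
    exact fun l => H l.length l le_rfl
  intro n
  induction n with
  | zero =>
    intro l hl hm
    rw [List.length_eq_zero_iff.mp (Nat.le_zero.mp hl)] at hm
    simp at hm
  | succ n IH =>
    intro l hlen hmem
    match l with
    | x :: t =>
      have R := REC φ c hmc x t
      have hphi : φ ((x :: t).prod) = 0 := by
        rw [List.prod_eq_zero hmem, phi_zero φ hadd]
      have ht : t.length ≤ n := by simpa using hlen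
      have hsum0 : ∑ f ∈ ((finite_S (x :: t)).toFinset.erase (trivF x t)), f.eval c = 0 := by
        apply Finset.sum_eq_zero
        intro f hf
        simp only [Finset.mem_erase, Set.Finite.mem_toFinset, Set.mem_setOf_eq] at hf
        obtain ⟨hne, hlet⟩ := hf
        obtain ⟨g, rest, rfl, hsplit⟩ := forest_dec f x t hlet
        have hlens : g.letters.length + rest.letters.length = t.length := by
          rw [← hsplit]; simp
        by_cases hrest : rest = NCForest.nil
        · subst hrest
          have hgl : g.letters = t := by simpa using hsplit
          have hgn : g ≠ trivGaps t := by
            intro h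
            exact hne (by rw [h]; rfl)
          have hbl : g.blockLen + 1 ≤ n := by
            have h1 := blockLen_le g
            rcases Nat.lt_or_ge g.blockLen t.length with h | h
            · omega
            · exfalso
              apply hgn
              have : g.blockLen = g.letters.length := by rw [hgl]; omega
              rw [eq_trivGaps_of_blockLen g this, hgl]
          have hblock : (x :: g.evalArgs c).length ≤ n := by
            simp [evalArgs_length]; omega
          simp only [evalF_cons, evalT_node, evalF_nil, mul_one]
          rcases List.mem_cons.mp hmem with h0 | h0
          · exact IH _ hblock (by simp [← h0])
          · have hg0 : (0 : A) ∈ g.evalArgs c := by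
              have := (Zstruct c n IH n).2.1 g (by omega) (by omega) (by rw [hgl]; exact h0)
              exact this
            exact IH _ hblock (by simp [hg0])
        · have hrl : rest.letters ≠ [] := fun h => hrest (NCForest.eq_nil_of_letters rest h)
          have hrpos : 0 < rest.letters.length := List.length_pos_iff.mpr hrl
          have hgpos : 0 < (NCTree.node x g).letters.length := (NCTree.node x g).letters_pos
          simp only [lettersT_node, List.length_cons] at hgpos
          rcases List.mem_cons.mp hmem with h0 | h0
          · rw [evalF_cons,
              (Zstruct c n IH n).1 (NCTree.node x g) (by simp; omega) (by simp; omega)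
                (by simp [← h0]), zero_mul]
          · rw [← hsplit] at h0
            rcases List.mem_append.mp h0 with h1 | h1
            · rw [evalF_cons,
                (Zstruct c n IH n).1 (NCTree.node x g) (by simp; omega) (by simp; omega)
                  (by simp [h1]), zero_mul]
            · rw [evalF_cons,
                (Zstruct c n IH n).2.2 rest (by omega) (by omega) h1, mul_zero]
      rw [hphi, hsum0, add_zero] at R
      exact R.symm
/-! ### good letters (of the form b * a) -/

lemma good_list [Ring A] (B : Subring A) (a : A) :
    ∀ l : List A, (∀ x ∈ l, ∃ b ∈ B, x = b * a) →
      ∃ bs : List A, (∀ b ∈ bs, b ∈ B) ∧ l = bs.map (fun b => b * a) := by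
  intro l
  induction l with
  | nil => exact fun _ => ⟨[], by simp, rfl⟩
  | cons x t ih =>
    intro h
    obtain ⟨b, hb, hx⟩ := h x List.mem_cons_self
    obtain ⟨bs, h1, h2⟩ := ih (fun y hy => h y (List.mem_cons_of_mem x hy))
    refine ⟨b :: bs, ?_, by simp [← hx, ← h2]⟩
    intro b' hb'
    rcases List.mem_cons.mp hb' with rfl | hb'
    · exact hb
    · exact h1 b' hb'

theorem argsGood [Ring A] (B : Subring A) (c : List A → A) (hcB : ∀ l, c l ∈ B) (a : A) :
    ∀ g : NCGaps A, (∀ x ∈ g.letters, ∃ b ∈ B, x = b * a) →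
      ∀ y ∈ g.evalArgs c, ∃ b ∈ B, y = b * a
  | .nil => by intro _ y hy; simp at hy
  | .cons f x gg => by
    intro h y hy
    simp only [evalG_cons, List.mem_cons] at hy
    rcases hy with rfl | hy
    · obtain ⟨b, hb, hx⟩ := h x (by simp)
      exact ⟨f.eval c * b, mul_mem (evalF_mem B c hcB f) hb, by rw [hx, mul_assoc]⟩
    · exact argsGood B c hcB a gg (fun z hz => h z (by simp [hz])) y hy

/-! ### every odd forest over good letters evaluates to zero -/

lemma struct3 [Ring A] (B : Subring A) (c : List A → A) (a : A) (hcB : ∀ l, c l ∈ B)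
    (hZ : ∀ l : List A, (0 : A) ∈ l → c l = 0)
    (hL : ∀ (x : A) (t : List A), ∀ b ∈ B, c (b * x :: t) = b * c (x :: t))
    (N : ℕ)
    (Hc : ∀ bs : List A, (∀ b ∈ bs, b ∈ B) → Even bs.length → bs.length + 1 ≤ N →
        c (a :: bs.map (fun b => b * a)) = 0) :
    ∀ k : ℕ,
      (∀ t : NCTree A, t.letters.length ≤ k → t.letters.length ≤ N →
        (∀ x ∈ t.letters, ∃ b ∈ B, x = b * a) → Odd t.letters.length → t.eval c = 0) ∧
      (∀ g : NCGaps A, g.letters.length ≤ k → g.letters.length ≤ N →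
        (∀ x ∈ g.letters, ∃ b ∈ B, x = b * a) → Odd (g.letters.length + g.blockLen) →
        (0 : A) ∈ g.evalArgs c) ∧
      (∀ f : NCForest A, f.letters.length ≤ k → f.letters.length ≤ N →
        (∀ x ∈ f.letters, ∃ b ∈ B, x = b * a) → Odd f.letters.length → f.eval c = 0) := by
  intro k
  induction k with
  | zero =>
    refine ⟨?_, ?_, ?_⟩
    · intro t hk _ _ hodd
      rw [Nat.le_zero.mp hk] at hodd
      simp [Nat.odd_iff] at hodd
    · intro g hk _ _ hodd
      have hg : g = NCGaps.nil :=
        NCGaps.eq_nil_of_letters g (List.length_eq_zero_iff.mp (Nat.le_zero.mp hk))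
      subst hg
      simp [Nat.odd_iff] at hodd
    · intro f hk _ _ hodd
      rw [Nat.le_zero.mp hk] at hodd
      simp [Nat.odd_iff] at hodd
  | succ k IH =>
    obtain ⟨IHt, IHg, IHf⟩ := IH
    have Tc : ∀ t : NCTree A, t.letters.length ≤ k + 1 → t.letters.length ≤ N →
        (∀ x ∈ t.letters, ∃ b ∈ B, x = b * a) → Odd t.letters.length → t.eval c = 0 := by
      intro t hk hN hgood hodd
      cases t with | node x g =>
      simp only [lettersT_node, List.length_cons] at hk hN hodd
      obtain ⟨b0, hb0, hx⟩ := hgood x (by simp)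
      have hgood' : ∀ y ∈ g.letters, ∃ b ∈ B, y = b * a :=
        fun y hy => hgood y (by simp [hy])
      have hble := blockLen_le g
      by_cases hpar : Even g.blockLen
      · obtain ⟨bs, hbsB, hbs⟩ :=
          good_list B a (g.evalArgs c) (argsGood B c hcB a g hgood')
        have hlenbs : bs.length = g.blockLen := by
          rw [← evalArgs_length c g, hbs, List.length_map]
        rw [evalT_node, hx, hL a (g.evalArgs c) b0 hb0, hbs,
          Hc bs hbsB (hlenbs ▸ hpar) (by omega), mul_zero]
      · have hargs := IHg g (by omega) (by omega) hgood'
          (by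
            rw [Nat.odd_iff] at hodd ⊢
            rw [Nat.even_iff] at hpar
            omega)
        exact hZ _ (by simp [hargs])
    have Gc : ∀ g : NCGaps A, g.letters.length ≤ k + 1 → g.letters.length ≤ N →
        (∀ x ∈ g.letters, ∃ b ∈ B, x = b * a) → Odd (g.letters.length + g.blockLen) →
        (0 : A) ∈ g.evalArgs c := by
      intro g hk hN hgood hodd
      cases g with
      | nil => simp [Nat.odd_iff] at hodd
      | cons f x gg =>
        simp only [lettersG_cons, List.length_append, List.length_cons, blockLen_cons]
          at hk hN hodd
        simp only [evalG_cons, List.mem_cons]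
        by_cases hf : Odd f.letters.length
        · left
          rw [IHf f (by omega) (by omega)
            (fun y hy => hgood y (by simp [hy])) hf, zero_mul]
        · right
          apply IHg gg (by omega) (by omega) (fun y hy => hgood y (by simp [hy]))
          rw [Nat.odd_iff] at hodd ⊢
          rw [Nat.odd_iff] at hf
          omega
    have Fc : ∀ f : NCForest A, f.letters.length ≤ k + 1 → f.letters.length ≤ N →
        (∀ x ∈ f.letters, ∃ b ∈ B, x = b * a) → Odd f.letters.length → f.eval c = 0 := by
      intro f hk hN hgood hodd
      cases f with
      | nil => simp [Nat.odd_iff] at hodd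
      | cons t ff =>
        simp only [lettersF_cons, List.length_append] at hk hN hodd
        have hpos := t.letters_pos
        by_cases ht : Odd t.letters.length
        · rw [evalF_cons, Tc t (by omega) (by omega)
            (fun y hy => hgood y (by simp [hy])) ht, zero_mul]
        · rw [evalF_cons, IHf ff (by omega) (by omega)
            (fun y hy => hgood y (by simp [hy]))
            (by
              rw [Nat.odd_iff] at hodd ⊢
              rw [Nat.odd_iff] at ht
              omega), mul_zero]
    exact ⟨Tc, Gc, Fc⟩
/-- Let `(A, φ)` be a `B`-valued probability space and let the `B`-valued cumulants
`c` be determined from the moments by Möbius inversion, i.e. by the moment–cumulant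
formula `φ(a₁⋯aₙ) = Σ_{π ∈ NC(n)} ĉ(π)(a₁ ⊗ ⋯ ⊗ aₙ)` (noncrossing partitions being
encoded as forests).  Then `a` is `B`-even (all odd `B`-valued moments
`φ(a b₂ a ⋯ b_m a)`, `m` odd, vanish) if and only if all odd `B`-valued cumulants
`c^{(m)}(a ⊗ b₂a ⊗ ⋯ ⊗ b_m a)` vanish. -/
theorem stmt_16
    {A : Type u} [Ring A] (B : Subring A) (φ : A → A)
    (hmem : ∀ x, φ x ∈ B)
    (hadd : ∀ x y, φ (x + y) = φ x + φ y)
    (hid : ∀ b ∈ B, φ b = b)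
    (hbimod : ∀ b ∈ B, ∀ b' ∈ B, ∀ x : A, φ (b * x * b') = b * φ x * b')
    (c : List A → A) (hcB : ∀ l, c l ∈ B)
    (hmc : ∀ l : List A, l ≠ [] →
      φ l.prod = ∑ᶠ f ∈ {f : NCForest A | f.letters = l}, f.eval c)
    (a : A) :
    (∀ bs : List A, (∀ b ∈ bs, b ∈ B) → Even bs.length →
        φ (a * (bs.map (fun b => b * a)).prod) = 0)
      ↔
    (∀ bs : List A, (∀ b ∈ bs, b ∈ B) → Even bs.length →
        c (a :: bs.map (fun b => b * a)) = 0) := by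
  have hZ : ∀ l : List A, (0 : A) ∈ l → c l = 0 := Zl φ c hadd hmc
  have hL : ∀ (x : A) (t : List A), ∀ b ∈ B, c (b * x :: t) = b * c (x :: t) :=
    Lmul B φ c hbimod hmc
  constructor
  · -- moments vanish ⟹ cumulants vanish
    intro hmom
    have main : ∀ bs : List A,
        (∀ bs' : List A, bs'.length < bs.length → (∀ b ∈ bs', b ∈ B) → Even bs'.length →
          c (a :: bs'.map (fun b => b * a)) = 0) →
        (∀ b ∈ bs, b ∈ B) → Even bs.length → c (a :: bs.map (fun b => b * a)) = 0 := by
      intro bs IH' hB heven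
      set tl := bs.map (fun b => b * a) with htl
      have htllen : tl.length = bs.length := by rw [htl, List.length_map]
      have R := REC φ c hmc a tl
      have hphi : φ ((a :: tl).prod) = 0 := by
        rw [List.prod_cons]; exact hmom bs hB heven
      have Hc : ∀ bs' : List A, (∀ b ∈ bs', b ∈ B) → Even bs'.length →
          bs'.length + 1 ≤ bs.length → c (a :: bs'.map (fun b => b * a)) = 0 :=
        fun bs' h1 h2 h3 => IH' bs' (by omega) h1 h2
      have trip := struct3 B c a hcB hZ hL bs.length Hc bs.length
      have hgoodw : ∀ x ∈ (a :: tl), ∃ b ∈ B, x = b * a := by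
        intro x hx
        rcases List.mem_cons.mp hx with rfl | hx
        · exact ⟨1, one_mem B, (one_mul x).symm⟩
        · obtain ⟨b, hb, hba⟩ := List.mem_map.mp (htl ▸ hx)
          exact ⟨b, hB b hb, hba.symm⟩
      have hsum0 : ∑ f ∈ ((finite_S (a :: tl)).toFinset.erase (trivF a tl)), f.eval c = 0 := by
        apply Finset.sum_eq_zero
        intro f hf
        simp only [Finset.mem_erase, Set.Finite.mem_toFinset, Set.mem_setOf_eq] at hf
        obtain ⟨hne, hlet⟩ := hf
        obtain ⟨g, rest, rfl, hsplit⟩ := forest_dec f a tl hlet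
        have hlens : g.letters.length + rest.letters.length = tl.length := by
          rw [← hsplit]; simp
        by_cases hrest : rest = NCForest.nil
        · subst hrest
          have hgl : g.letters = tl := by simpa using hsplit
          have hglen : g.letters.length = bs.length := by rw [hgl, htllen]
          have hgn : g ≠ trivGaps tl := fun h => hne (by rw [h]; rfl)
          have hble := blockLen_le g
          have hblt : g.blockLen < tl.length := by
            rcases Nat.lt_or_ge g.blockLen tl.length with h | h
            · exact h
            · exfalso; apply hgn
              have hbb : g.blockLen = g.letters.length := by
                rw [hgl]; omega
              rw [eq_trivGaps_of_blockLen g hbb, hgl]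
          simp only [evalF_cons, evalT_node, evalF_nil, mul_one]
          have hgood' : ∀ y ∈ g.letters, ∃ b ∈ B, y = b * a := fun y hy =>
            hgoodw y (List.mem_cons_of_mem a (hgl ▸ hy))
          by_cases hpar : Even g.blockLen
          · obtain ⟨bs', hbs'B, hbs'⟩ :=
              good_list B a (g.evalArgs c) (argsGood B c hcB a g hgood')
            have hlb : bs'.length = g.blockLen := by
              rw [← evalArgs_length c g, hbs', List.length_map]
            rw [hbs']
            exact IH' bs' (by omega) hbs'B (hlb ▸ hpar)
          · have h0 := trip.2.1 g (by omega) (by omega) hgood'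
              (by
                rw [Nat.odd_iff, hglen]
                have h1 : bs.length % 2 = 0 := Nat.even_iff.mp heven
                have h2 : ¬ g.blockLen % 2 = 0 := fun h => hpar (Nat.even_iff.mpr h)
                omega)
            exact hZ _ (by simp [h0])
        · have hrl : rest.letters ≠ [] := fun h => hrest (NCForest.eq_nil_of_letters rest h)
          have hrpos : 0 < rest.letters.length := List.length_pos_iff.mpr hrl
          have hgoodt : ∀ y ∈ (NCTree.node a g).letters, ∃ b ∈ B, y = b * a := by
            intro y hy
            rcases List.mem_cons.mp hy with rfl | hy
            · exact ⟨1, one_mem B, (one_mul y).symm⟩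
            · refine hgoodw y (List.mem_cons_of_mem a ?_)
              rw [← hsplit]
              exact List.mem_append_left _ hy
          have hgoodr : ∀ y ∈ rest.letters, ∃ b ∈ B, y = b * a := by
            intro y hy
            refine hgoodw y (List.mem_cons_of_mem a ?_)
            rw [← hsplit]
            exact List.mem_append_right _ hy
          have hlent : (NCTree.node a g).letters.length = g.letters.length + 1 := by simp
          have hbs2 : bs.length % 2 = 0 := Nat.even_iff.mp heven
          by_cases ht : Odd (NCTree.node a g).letters.length
          · rw [evalF_cons, trip.1 (NCTree.node a g) (by rw [hlent]; omega)
              (by rw [hlent]; omega) hgoodt ht, zero_mul]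
          · rw [evalF_cons, trip.2.2 rest (by omega) (by omega) hgoodr
              (by
                rw [Nat.odd_iff]
                rw [hlent, Nat.odd_iff] at ht
                omega), mul_zero]
      rw [hsum0, add_zero, hphi] at R
      exact R.symm
    suffices H : ∀ n, ∀ bs : List A, bs.length ≤ n → (∀ b ∈ bs, b ∈ B) → Even bs.length →
        c (a :: bs.map (fun b => b * a)) = 0 by
      exact fun bs h1 h2 => H bs.length bs le_rfl h1 h2
    intro n
    induction n with
    | zero =>
      intro bs hlen hB heven
      exact main bs (fun bs' h _ _ => absurd h (by omega)) hB heven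
    | succ n IHn =>
      intro bs hlen hB heven
      exact main bs (fun bs' h h1 h2 => IHn bs' (by omega) h1 h2) hB heven
  · -- cumulants vanish ⟹ moments vanish
    intro hcum bs hB heven
    set tl := bs.map (fun b => b * a) with htl
    have htllen : tl.length = bs.length := by rw [htl, List.length_map]
    have hprod : a * tl.prod = (a :: tl).prod := (List.prod_cons).symm
    rw [hprod, hmc (a :: tl) (by simp)]
    have hset : ∑ᶠ f ∈ {f : NCForest A | f.letters = a :: tl}, f.eval c
        = ∑ f ∈ (finite_S (a :: tl)).toFinset, f.eval c :=
      finsum_mem_eq_sum_of_subset _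
        (fun y hy => by simpa [Set.Finite.mem_toFinset] using hy.1)
        (fun y hy => by simpa [Set.Finite.mem_toFinset] using hy)
    rw [hset]
    apply Finset.sum_eq_zero
    intro f hf
    simp only [Set.Finite.mem_toFinset, Set.mem_setOf_eq] at hf
    have Hc : ∀ bs' : List A, (∀ b ∈ bs', b ∈ B) → Even bs'.length →
        bs'.length + 1 ≤ (a :: tl).length → c (a :: bs'.map (fun b => b * a)) = 0 :=
      fun bs' h1 h2 _ => hcum bs' h1 h2
    have trip := struct3 B c a hcB hZ hL (a :: tl).length Hc (a :: tl).length
    apply trip.2.2 f (by rw [hf]) (by rw [hf]) ?_ ?_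
    · intro x hx
      rw [hf] at hx
      rcases List.mem_cons.mp hx with rfl | hx
      · exact ⟨1, one_mem B, (one_mul x).symm⟩
      · obtain ⟨b, hb, hba⟩ := List.mem_map.mp (htl ▸ hx)
        exact ⟨b, hB b hb, hba.symm⟩
    · rw [hf]
      simp only [List.length_cons, htllen]
      exact Even.add_one heven
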